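/- Let R be a principal ideal domain and let (M₁,λ₁,∂₁) and (M₂,λ₂,∂₂) be formed spaces with boundary over R such that ∂₁ and ∂₂ are surjective. If (M₁,λ₁,∂₁) # X is isomorphic to (M₂,λ₂,∂₂) # X as formed spaces with boundary, then (M₁,λ₁,∂₁) is isomorphic to (M₂,λ₂,∂₂). -/

import Mathlib

/- Auxiliary machinery for the proof. -/

open UniqueFactorizationMonoid

section CancellationAux
variable {R : Type} [CommRing R] [IsDomain R] [IsPrincipalIdealRing R]
variable {M : Type} [AddCommGroup M] [Module R M]

variable {R : Type} [CommRing R] [IsDomain R] [IsPrincipalIdealRing R]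
variable {M : Type} [AddCommGroup M] [Module R M]

lemma isCoprime_of_forall_prime' {x β : R} (hβ : β ≠ 0)
    (h : ∀ r : R, Prime r → r ∣ β → ¬ r ∣ x) : IsCoprime x β := by
  obtain ⟨d, hd⟩ : (Ideal.span ({x, β} : Set R)).IsPrincipal :=
    IsPrincipalIdealRing.principal _
  have hxI : x ∈ Ideal.span ({x, β} : Set R) := Ideal.subset_span (by simp)
  have hβI : β ∈ Ideal.span ({x, β} : Set R) := Ideal.subset_span (by simp)
  rw [hd, Ideal.submodule_span_eq, Ideal.mem_span_singleton] at hxI hβI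
  have hd0 : d ≠ 0 := by rintro rfl; exact hβ (by simpa using hβI)
  have hdu : IsUnit d := by
    by_contra hdu
    obtain ⟨r, hr, hrd⟩ := WfDvdMonoid.exists_irreducible_factor hdu hd0
    exact h r hr.prime (hrd.trans hβI) (hrd.trans hxI)
  have htop : Ideal.span ({x, β} : Set R) = ⊤ := by
    rw [hd, Ideal.submodule_span_eq, Ideal.span_singleton_eq_top.mpr hdu]
  have h1 : (1 : R) ∈ Ideal.span ({x, β} : Set R) := htop ▸ Submodule.mem_top
  rw [Ideal.mem_span_pair] at h1
  obtain ⟨a, b, hab⟩ := h1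
  exact ⟨a, b, hab⟩

omit [IsDomain R] [IsPrincipalIdealRing R] in
lemma exists_not_dvd_pair (φ₁ φ₂ : M →ₗ[R] R)
    (h₁ : Function.Surjective φ₁) (h₂ : Function.Surjective φ₂)
    {p : R} (hp : ¬ IsUnit p) :
    ∃ v : M, ¬ p ∣ φ₁ v ∧ ¬ p ∣ φ₂ v := by
  obtain ⟨a, ha⟩ := h₁ 1
  obtain ⟨b, hb⟩ := h₂ 1
  have h1 : ¬ p ∣ (1 : R) := fun h => hp (isUnit_of_dvd_one h)
  by_cases hpa : p ∣ φ₂ a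
  · by_cases hpb : p ∣ φ₁ b
    · refine ⟨a + b, ?_, ?_⟩
      · rw [map_add, ha]
        intro h
        exact h1 ((dvd_add_right hpb).mp (by rwa [add_comm] at h))
      · rw [map_add, hb]
        intro h
        exact h1 ((dvd_add_right hpa).mp h)
    · exact ⟨b, hpb, by rw [hb]; exact h1⟩
  · exact ⟨a, by rw [ha]; exact h1, hpa⟩

lemma exists_coprime_point (φ₁ φ₂ : M →ₗ[R] R)
    (h₁ : Function.Surjective φ₁) (h₂ : Function.Surjective φ₂)
    {β : R} (hβ : β ≠ 0) :
    ∃ v : M, IsCoprime (φ₁ v * φ₂ v) β := by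
  classical
  letI : NormalizationMonoid R := UniqueFactorizationMonoid.normalizationMonoid.toNormalizationMonoid
  set S : Finset R := (normalizedFactors β).toFinset with hS
  have hSprime : ∀ p ∈ S, Prime p := by
    intro p hp
    exact prime_of_normalized_factor p (Multiset.mem_toFinset.mp hp)
  have hSnorm : ∀ p ∈ S, normalize p = p := by
    intro p hp
    exact normalize_normalized_factor p (Multiset.mem_toFinset.mp hp)
  have hgood : ∀ p ∈ S, ∃ v : M, ¬ p ∣ φ₁ v ∧ ¬ p ∣ φ₂ v := fun p hp =>
    exists_not_dvd_pair φ₁ φ₂ h₁ h₂ (hSprime p hp).not_isUnit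
  choose! w hw₁ hw₂ using hgood
  set v : M := ∑ p ∈ S, (∏ q ∈ S.erase p, q) • w p with hv
  -- key: for p ∈ S, p does not divide φᵢ v
  have key : ∀ φ : M →ₗ[R] R, (∀ p ∈ S, ¬ p ∣ φ (w p)) → ∀ p ∈ S, ¬ p ∣ φ v := by
    intro φ hwφ p hpS hdvd
    have hφv : φ v = ∑ q ∈ S, (∏ r ∈ S.erase q, r) * φ (w q) := by
      rw [hv, map_sum]; congr 1; ext q; rw [map_smul, smul_eq_mul]
    have hsplit : φ v = (∏ r ∈ S.erase p, r) * φ (w p)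
        + ∑ q ∈ S.erase p, (∏ r ∈ S.erase q, r) * φ (w q) := by
      rw [hφv, ← Finset.add_sum_erase _ _ hpS]
    have hrest : p ∣ ∑ q ∈ S.erase p, (∏ r ∈ S.erase q, r) * φ (w q) := by
      refine Finset.dvd_sum ?_
      intro q hq
      have hpq : p ∈ S.erase q := by
        rw [Finset.mem_erase] at hq ⊢
        exact ⟨fun h => hq.1 h.symm, hpS⟩
      exact Dvd.dvd.mul_right (Finset.dvd_prod_of_mem _ hpq) _
    have hmain : p ∣ (∏ r ∈ S.erase p, r) * φ (w p) := by
      have := hsplit ▸ hdvd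
      exact (dvd_add_right hrest).mp (by rwa [add_comm] at this)
    rcases (hSprime p hpS).dvd_mul.mp hmain with h | h
    · obtain ⟨q, hq, hpq⟩ := (hSprime p hpS).exists_mem_finset_dvd h
      have hqS : q ∈ S := Finset.mem_of_mem_erase hq
      have : p = q := by
        have hass : Associated p q := (hSprime p hpS).associated_of_dvd (hSprime q hqS) hpq
        rw [← hSnorm p hpS, ← hSnorm q hqS]
        exact normalize_eq_normalize hass.dvd hass.symm.dvd
      exact (Finset.mem_erase.mp hq).1 this.symm
    · exact hwφ p hpS h
  refine ⟨v, isCoprime_of_forall_prime' hβ ?_⟩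
  intro r hr hrβ hrx
  obtain ⟨p, hpS, hassoc⟩ := exists_mem_normalizedFactors_of_dvd hβ hr.irreducible hrβ
  have hpS' : p ∈ S := Multiset.mem_toFinset.mpr hpS
  have hpx : p ∣ φ₁ v * φ₂ v := hassoc.symm.dvd.trans hrx
  rcases (hSprime p hpS').dvd_mul.mp hpx with h | h
  · exact key φ₁ hw₁ p hpS' h
  · exact key φ₂ hw₂ p hpS' h

omit [IsDomain R] [IsPrincipalIdealRing R] in
lemma skew (lam : M →ₗ[R] M →ₗ[R] R) (halt : ∀ a, lam a a = 0) (a b : M) :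
    lam a b = - lam b a := by
  have h := halt (a + b)
  simp only [map_add, LinearMap.add_apply, halt a, halt b] at h
  linear_combination h

lemma lemma_b_main (lam : M →ₗ[R] M →ₗ[R] R) (halt : ∀ a, lam a a = 0)
    (bd : M →ₗ[R] R) (hbd : Function.Surjective bd)
    (x₀ : M) (hD : Function.Surjective (bd - lam x₀)) (hβ : bd x₀ ≠ 0) :
    ∃ W : M ≃ₗ[R] M, (∀ a b, lam (W a) (W b) = lam a b) ∧
      ∀ a, bd (W a) = bd a - lam x₀ a := by
  classical
  set β : R := bd x₀ with hβdef
  obtain ⟨v, hcop⟩ := exists_coprime_point bd (bd - lam x₀) hbd hD hβ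
  set c : R := bd v with hc
  set e₀ : R := lam x₀ v with he₀
  have hDv : (bd - lam x₀) v = c - e₀ := by simp [hc, he₀]
  rw [hDv] at hcop
  obtain ⟨a, b, hab⟩ := hcop
  set p : R := -b with hp
  set q : R := -(a * (c - e₀)) with hq
  set s : R := -(a * c) with hs
  set t : R := a * β with ht
  have h1 : p * β + q * c = -1 := by simp only [hp, hq]; linear_combination -hab
  have h2 : s * β + t * c = 0 := by simp only [hs, ht]; ring
  have h3 : q - s + e₀ * (p * t - s * q) = 0 := by
    simp only [hp, hq, hs, ht]; linear_combination (-(a * e₀)) * hab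
  set ψ : M →ₗ[R] R := p • (lam x₀) + s • (lam v) with hψ
  set θ : M →ₗ[R] R := q • (lam x₀) + t • (lam v) with hθ
  set ψ' : M →ₗ[R] R := (-(1 + q * e₀)) • ψ + (p * e₀) • θ with hψ'
  set θ' : M →ₗ[R] R := (-(1 - s * e₀)) • θ + (-(t * e₀)) • ψ with hθ'
  set W : M →ₗ[R] M := LinearMap.id + ψ.smulRight x₀ + θ.smulRight v with hW
  set W' : M →ₗ[R] M := LinearMap.id + ψ'.smulRight x₀ + θ'.smulRight v with hW'
  have h00 : lam x₀ x₀ = 0 := halt x₀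
  have hvv : lam v v = 0 := halt v
  have hvx : lam v x₀ = -e₀ := by rw [skew lam halt v x₀, he₀]
  have hψapp : ∀ y, ψ y = p * lam x₀ y + s * lam v y := by
    intro y; simp [hψ]
  have hθapp : ∀ y, θ y = q * lam x₀ y + t * lam v y := by
    intro y; simp [hθ]
  have hψx₀ : ψ x₀ = -(s * e₀) := by rw [hψapp, h00, hvx]; ring
  have hψv : ψ v = p * e₀ := by rw [hψapp, hvv, ← he₀]; ring
  have hθx₀ : θ x₀ = -(t * e₀) := by rw [hθapp, h00, hvx]; ring
  have hθv : θ v = q * e₀ := by rw [hθapp, hvv, ← he₀]; ring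
  have eψ' : ∀ y, ψ' y = -(1 + q * e₀) * ψ y + (p * e₀) * θ y := by
    intro y; simp [hψ']
  have eθ' : ∀ y, θ' y = -(1 - s * e₀) * θ y + (-(t * e₀)) * ψ y := by
    intro y; simp [hθ']
  have hWapp : ∀ y, W y = y + ψ y • x₀ + θ y • v := by
    intro y; simp [hW]
  have hW'app : ∀ y, W' y = y + ψ' y • x₀ + θ' y • v := by
    intro y; simp [hW']
  have L1 : ∀ y, ψ (W' y) = - ψ' y := by
    intro y
    rw [hW'app, map_add, map_add, map_smul, map_smul, smul_eq_mul, smul_eq_mul,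
      hψx₀, hψv, eψ' y, eθ' y]
    linear_combination (-(e₀) * (ψ y)) * h3
  have L2 : ∀ y, θ (W' y) = - θ' y := by
    intro y
    rw [hW'app, map_add, map_add, map_smul, map_smul, smul_eq_mul, smul_eq_mul,
      hθx₀, hθv, eψ' y, eθ' y]
    linear_combination (-(e₀) * (θ y)) * h3
  have L1' : ∀ y, ψ' (W y) = - ψ y := by
    intro y
    rw [hWapp, map_add, map_add, map_smul, map_smul, smul_eq_mul, smul_eq_mul]
    rw [eψ' x₀, eψ' v, eψ' y, hψx₀, hψv, hθx₀, hθv]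
    linear_combination (-(e₀) * (ψ y)) * h3
  have L2' : ∀ y, θ' (W y) = - θ y := by
    intro y
    rw [hWapp, map_add, map_add, map_smul, map_smul, smul_eq_mul, smul_eq_mul]
    rw [eθ' x₀, eθ' v, eθ' y, hψx₀, hψv, hθx₀, hθv]
    linear_combination (-(e₀) * (θ y)) * h3
  have hcomp1 : ∀ y, W (W' y) = y := by
    intro y
    rw [hWapp, L1, L2, hW'app]
    module
  have hcomp2 : ∀ y, W' (W y) = y := by
    intro y
    rw [hW'app, L1', L2', hWapp]
    module
  refine ⟨LinearEquiv.ofLinear W W' (by ext y; simp [hcomp1 y]) (by ext y; simp [hcomp2 y]),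
    ?_, ?_⟩
  · intro y z
    show lam (W y) (W z) = lam y z
    rw [hWapp y, hWapp z]
    simp only [map_add, map_smul, LinearMap.add_apply, LinearMap.smul_apply, smul_eq_mul]
    rw [skew lam halt y x₀, skew lam halt y v, h00, hvv, hvx, ← he₀,
      hψapp y, hψapp z, hθapp y, hθapp z]
    linear_combination ((lam x₀ y) * (lam v z) - (lam x₀ z) * (lam v y)) * h3
  · intro y
    show bd (W y) = bd y - lam x₀ y
    rw [hWapp y, map_add, map_add, map_smul, map_smul, smul_eq_mul, smul_eq_mul,
      ← hβdef, ← hc, hψapp y, hθapp y]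
    linear_combination (lam x₀ y) * h1 + (lam v y) * h2


lemma lemma_b (lam : M →ₗ[R] M →ₗ[R] R) (halt : ∀ a, lam a a = 0)
    (bd : M →ₗ[R] R) (hbd : Function.Surjective bd)
    (x₀ : M) (hD : Function.Surjective (bd - lam x₀)) :
    ∃ W : M ≃ₗ[R] M, (∀ a b, lam (W a) (W b) = lam a b) ∧
      ∀ a, bd (W a) = bd a - lam x₀ a := by
  classical
  by_cases hβ : bd x₀ ≠ 0
  · exact lemma_b_main lam halt bd hbd x₀ hD hβ
  push_neg at hβ
  obtain ⟨u, hu1, hu2⟩ := exists_not_dvd_pair bd (bd - lam x₀) hbd hD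
    (p := 0) not_isUnit_zero
  rw [zero_dvd_iff] at hu1 hu2
  set du : R := (bd - lam x₀) u with hdu
  set xt : M := x₀ - du • u with hxt
  set S : M →ₗ[R] M := LinearMap.id + (lam u).smulRight u with hS
  set S' : M →ₗ[R] M := LinearMap.id - (lam u).smulRight u with hS'
  have huu : lam u u = 0 := halt u
  have hSapp : ∀ y, S y = y + lam u y • u := by intro y; simp [hS]
  have hS'app : ∀ y, S' y = y - lam u y • u := by intro y; simp [hS']
  have hSS' : ∀ y, S (S' y) = y := by
    intro y
    rw [hS'app, hSapp, map_sub, map_smul, smul_eq_mul, huu, mul_zero, sub_zero]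
    module
  have hS'S : ∀ y, S' (S y) = y := by
    intro y
    rw [hSapp, hS'app, map_add, map_smul, smul_eq_mul, huu, mul_zero, add_zero]
    module
  have hSlam : ∀ y z, lam (S y) (S z) = lam y z := by
    intro y z
    rw [hSapp y, hSapp z]
    simp only [map_add, map_smul, LinearMap.add_apply, LinearMap.smul_apply, smul_eq_mul]
    rw [skew lam halt y u, huu]
    ring
  have hkey : ∀ y, (bd - lam x₀) (S y) = bd y - lam xt y := by
    intro y
    have hxtapp : lam xt y = lam x₀ y - du * lam u y := by
      rw [hxt, map_sub, LinearMap.sub_apply, map_smul, LinearMap.smul_apply, smul_eq_mul]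
    rw [hSapp y]
    simp only [LinearMap.sub_apply, map_add, map_smul, smul_eq_mul, hxtapp, hdu,
      LinearMap.sub_apply]
    ring
  have hbt : bd xt ≠ 0 := by
    have : bd xt = -(du * bd u) := by
      rw [hxt, map_sub, map_smul, smul_eq_mul, hβ]; ring
    rw [this, neg_ne_zero]
    exact mul_ne_zero hu2 hu1
  have hDt : Function.Surjective (bd - lam xt) := by
    intro r
    obtain ⟨z, hz⟩ := hD r
    refine ⟨S' z, ?_⟩
    have := hkey (S' z)
    rw [hSS'] at this
    rw [LinearMap.sub_apply, ← this, hz]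
  obtain ⟨Wt, hWtlam, hWtbd⟩ := lemma_b_main lam halt bd hbd xt hDt hbt
  set Seq : M ≃ₗ[R] M := LinearEquiv.ofLinear S S'
    (by ext y; simp [hSS' y]) (by ext y; simp [hS'S y]) with hSeq
  refine ⟨Seq.symm.trans Wt, ?_, ?_⟩
  · intro y z
    show lam (Wt (Seq.symm y)) (Wt (Seq.symm z)) = lam y z
    rw [hWtlam]
    have hy : S (Seq.symm y) = y := by
      have : Seq (Seq.symm y) = y := Seq.apply_symm_apply y
      simpa [hSeq, LinearEquiv.ofLinear_apply] using this
    have hz : S (Seq.symm z) = z := by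
      have : Seq (Seq.symm z) = z := Seq.apply_symm_apply z
      simpa [hSeq, LinearEquiv.ofLinear_apply] using this
    rw [← hSlam (Seq.symm y) (Seq.symm z), hy, hz]
  · intro y
    show bd (Wt (Seq.symm y)) = bd y - lam x₀ y
    rw [hWtbd]
    have hy : S (Seq.symm y) = y := by
      have : Seq (Seq.symm y) = y := Seq.apply_symm_apply y
      simpa [hSeq, LinearEquiv.ofLinear_apply] using this
    have := hkey (Seq.symm y)
    rw [hy] at this
    rw [← this, LinearMap.sub_apply]


end CancellationAux

/-- cancellation for PIDs: if `(M₁,λ₁,∂₁)` and `(M₂,λ₂,∂₂)` are formed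
spaces with boundary over a PID with surjective boundary maps, and `(M₁,λ₁,∂₁) # X` is
isomorphic to `(M₂,λ₂,∂₂) # X`, then `(M₁,λ₁,∂₁) ≅ (M₂,λ₂,∂₂)`.  Here `(Mᵢ,λᵢ,∂ᵢ) # X` is
realized on `Mᵢ × R` with form `((x,s),(y,t)) ↦ λᵢ(x,y) + ∂ᵢ(x)·t - ∂ᵢ(y)·s` and boundary
`(x,s) ↦ ∂ᵢ(x) + s`. -/
theorem cancellation_PID
    (R : Type) [CommRing R] [IsDomain R] [IsPrincipalIdealRing R]
    (M₁ : Type) [AddCommGroup M₁] [Module R M₁] [Module.Finite R M₁] [Module.Free R M₁]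
    (M₂ : Type) [AddCommGroup M₂] [Module R M₂] [Module.Finite R M₂] [Module.Free R M₂]
    (lam₁ : M₁ →ₗ[R] M₁ →ₗ[R] R) (halt₁ : ∀ v : M₁, lam₁ v v = 0) (bd₁ : M₁ →ₗ[R] R)
    (lam₂ : M₂ →ₗ[R] M₂ →ₗ[R] R) (halt₂ : ∀ v : M₂, lam₂ v v = 0) (bd₂ : M₂ →ₗ[R] R)
    (hbd₁ : Function.Surjective bd₁) (hbd₂ : Function.Surjective bd₂)
    (hiso : ∃ e : (M₁ × R) ≃ₗ[R] (M₂ × R),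
      (∀ p q : M₁ × R,
        lam₂ (e p).1 (e q).1 + bd₂ (e p).1 * (e q).2 - bd₂ (e q).1 * (e p).2
          = lam₁ p.1 q.1 + bd₁ p.1 * q.2 - bd₁ q.1 * p.2) ∧
      (∀ p : M₁ × R, bd₂ (e p).1 + (e p).2 = bd₁ p.1 + p.2)) :
    ∃ e : M₁ ≃ₗ[R] M₂,
      (∀ x y : M₁, lam₂ (e x) (e y) = lam₁ x y) ∧ ∀ x : M₁, bd₂ (e x) = bd₁ x := by
  classical
  obtain ⟨e, he1, he2⟩ := hiso
  set j₁ : M₁ →ₗ[R] M₁ × R := LinearMap.prod LinearMap.id (-bd₁) with hj₁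
  set j₂ : M₂ →ₗ[R] M₂ × R := LinearMap.prod LinearMap.id (-bd₂) with hj₂
  set f : M₁ →ₗ[R] M₂ :=
    (LinearMap.fst R M₂ R) ∘ₗ (e : (M₁ × R) →ₗ[R] (M₂ × R)) ∘ₗ j₁ with hf
  set g : M₂ →ₗ[R] M₁ :=
    (LinearMap.fst R M₁ R) ∘ₗ (e.symm : (M₂ × R) →ₗ[R] (M₁ × R)) ∘ₗ j₂ with hg
  have hfapp : ∀ x, f x = (e (x, -bd₁ x)).1 := by
    intro x; simp [hf, hj₁]
  have hgapp : ∀ y, g y = (e.symm (y, -bd₂ y)).1 := by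
    intro y; simp [hg, hj₂]
  -- full description of e (x, -bd₁ x)
  have hsnd : ∀ x : M₁, e (x, -bd₁ x) = (f x, - bd₂ (f x)) := by
    intro x
    have h := he2 (x, -bd₁ x)
    simp only [add_neg_cancel] at h
    have h2 : (e (x, -bd₁ x)).2 = - bd₂ (f x) := by
      rw [hfapp]; linear_combination h
    exact Prod.ext (by rw [hfapp]) h2
  have he2' : ∀ q : M₂ × R, bd₁ (e.symm q).1 + (e.symm q).2 = bd₂ q.1 + q.2 := by
    intro q
    have h := he2 (e.symm q)
    rw [e.apply_symm_apply] at h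
    exact h.symm
  have hsnd' : ∀ y : M₂, e.symm (y, -bd₂ y) = (g y, - bd₁ (g y)) := by
    intro y
    have h := he2' (y, -bd₂ y)
    simp only [add_neg_cancel] at h
    have h2 : (e.symm (y, -bd₂ y)).2 = - bd₁ (g y) := by
      rw [hgapp]; linear_combination h
    exact Prod.ext (by rw [hgapp]) h2
  have hgf : ∀ x, g (f x) = x := by
    intro x
    rw [hgapp]
    have : ((f x : M₂), -bd₂ (f x)) = e (x, -bd₁ x) := (hsnd x).symm
    rw [this, e.symm_apply_apply]
  have hfg : ∀ y, f (g y) = y := by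
    intro y
    rw [hfapp]
    have : ((g y : M₁), -bd₁ (g y)) = e.symm (y, -bd₂ y) := (hsnd' y).symm
    rw [this, e.apply_symm_apply]
  have hflam : ∀ x y, lam₂ (f x) (f y) = lam₁ x y := by
    intro x y
    have h := he1 (x, -bd₁ x) (y, -bd₁ y)
    rw [hsnd x, hsnd y] at h
    simp only at h
    linear_combination h
  set x₀ : M₂ := (e (0, 1)).1 with hx₀
  set s₀ : R := (e (0, 1)).2 with hs₀
  have hβs : bd₂ x₀ + s₀ = 1 := by
    have h := he2 (0, 1)
    simpa using h
  have hfbd : ∀ y, bd₂ (f y) = bd₁ y + lam₂ x₀ (f y) := by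
    intro y
    have h := he1 (0, 1) (y, -bd₁ y)
    rw [hsnd y] at h
    simp only [← hx₀, ← hs₀, map_zero, LinearMap.zero_apply, zero_mul, one_mul] at h
    linear_combination - h - bd₂ (f y) * hβs
  have hDsurj : Function.Surjective (bd₂ - lam₂ x₀) := by
    intro r
    obtain ⟨y, hy⟩ := hbd₁ r
    refine ⟨f y, ?_⟩
    rw [LinearMap.sub_apply, hfbd y, hy]
    ring
  obtain ⟨W, hWlam, hWbd⟩ := lemma_b lam₂ halt₂ bd₂ hbd₂ x₀ hDsurj
  set fEquiv : M₁ ≃ₗ[R] M₂ :=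
    LinearEquiv.ofLinear f g (by ext y; simp [hfg y]) (by ext x; simp [hgf x]) with hfEquiv
  refine ⟨fEquiv.trans W, ?_, ?_⟩
  · intro x y
    have : (fEquiv.trans W) x = W (f x) := by
      simp [hfEquiv, LinearEquiv.trans_apply, LinearEquiv.ofLinear_apply]
    have h2 : (fEquiv.trans W) y = W (f y) := by
      simp [hfEquiv, LinearEquiv.trans_apply, LinearEquiv.ofLinear_apply]
    rw [this, h2, hWlam, hflam]
  · intro x
    have : (fEquiv.trans W) x = W (f x) := by
      simp [hfEquiv, LinearEquiv.trans_apply, LinearEquiv.ofLinear_apply]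
    rw [this, hWbd, hfbd x]
    ring
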